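/- Let G be an infinite biosphere. Then IAP ∩ CONV ∩ CA ∩ REF, the set of all subsets of G which satisfy the identical ancestor point axiom, satisfy the convexity axiom, have the common ancestor property, and have the reflection property, is upward generic. -/

import Mathlib

/-- An infinite biosphere: a directed graph on vertex type `V` with a
birthdate function `t`, such that parents are born before children, only
finitely many organisms are born before any given time, every vertex has
finitely many children, and the vertex set is infinite. -/
structure InfiniteBiosphere (V : Type) where
  Edge : V → V → Prop
  t : V → ℝ
  edge_t : ∀ v w : V, Edge v w → t v < t w
  finite_early : ∀ r : ℝ, {v : V | t v < r}.Finite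
  finite_children : ∀ v : V, {w : V | Edge v w}.Finite
  infinite_verts : Infinite V

namespace InfiniteBiosphere

variable {V : Type}

/-- `v` is an ancestor of `w`: there is a directed path of length ≥ 1 from `v` to `w`. -/
def Ancestor (G : InfiniteBiosphere V) (v w : V) : Prop :=
  Relation.TransGen G.Edge v w

/-- The identical ancestor point axiom: for every `v ∈ S`, either all but
finitely many members of `S` are descendants of `v`, or all but finitely many
members of `S` are non-descendants of `v`. -/
def IAP (G : InfiniteBiosphere V) (S : Set V) : Prop :=
  ∀ v ∈ S, {w ∈ S | ¬ G.Ancestor v w}.Finite ∨ {w ∈ S | G.Ancestor v w}.Finite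

/-- The convexity axiom: any vertex with an ancestor in `S` and a descendant in `S` is in `S`. -/
def Convex (G : InfiniteBiosphere V) (S : Set V) : Prop :=
  ∀ v : V, (∃ a ∈ S, G.Ancestor a v) → (∃ d ∈ S, G.Ancestor v d) → v ∈ S

/-- `v` is a generator of `S`: `v ∈ S` and `S` contains at most finitely many
non-descendants of `v`. -/
def IsGenerator (G : InfiniteBiosphere V) (S : Set V) (v : V) : Prop :=
  v ∈ S ∧ {w ∈ S | ¬ G.Ancestor v w}.Finite

/-- The set of generators of `S`. -/
def gen (G : InfiniteBiosphere V) (S : Set V) : Set V :=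
  {v : V | G.IsGenerator S v}

/-- `S` is connected as a subgraph of `G`, ignoring edge directions. -/
def ConnectedSet (G : InfiniteBiosphere V) (S : Set V) : Prop :=
  ∀ a ∈ S, ∀ b ∈ S,
    Relation.ReflTransGen (fun x y => (G.Edge x y ∨ G.Edge y x) ∧ x ∈ S ∧ y ∈ S) a b

/-- A specieslike cluster: a connected set satisfying the identical ancestor
point axiom and the convexity axiom. -/
def SpecieslikeCluster (G : InfiniteBiosphere V) (S : Set V) : Prop :=
  G.ConnectedSet S ∧ G.IAP S ∧ G.Convex S

/-- The common ancestor property: some `v ∈ S` is an ancestor of every other member of `S`. -/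
def CommonAncestorProp (G : InfiniteBiosphere V) (S : Set V) : Prop :=
  ∃ v ∈ S, ∀ w ∈ S, w ≠ v → G.Ancestor v w

/-- The reflection property: every member of `S` with infinitely many
descendants in `G` has infinitely many descendants in `S`. -/
def ReflectionProp (G : InfiniteBiosphere V) (S : Set V) : Prop :=
  ∀ v ∈ S, {w : V | G.Ancestor v w}.Infinite → {w ∈ S | G.Ancestor v w}.Infinite

end InfiniteBiosphere

/-- `T` is upward generic: the union of any ascending chain of nonempty sets
from `T`, indexed by a nonempty linear order, is in `T`. -/
def UpwardGeneric {V : Type} (T : Set (Set V)) : Prop :=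
  ∀ (X : Type) [LinearOrder X] [Nonempty X] (C : X → Set V),
    (∀ a b : X, a < b → C a ⊆ C b) →
    (∀ a : X, (C a).Nonempty) →
    (∀ a : X, C a ∈ T) →
    (⋃ a : X, C a) ∈ T

/-- `T` is downward generic: the intersection of any descending chain of
nonempty sets from `T`, indexed by a nonempty linear order, is in `T`. -/
def DownwardGeneric {V : Type} (T : Set (Set V)) : Prop :=
  ∀ (X : Type) [LinearOrder X] [Nonempty X] (C : X → Set V),
    (∀ a b : X, a < b → C b ⊆ C a) →
    (∀ a : X, (C a).Nonempty) →
    (∀ a : X, C a ∈ T) →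
    (⋂ a : X, C a) ∈ T


private lemma anc_t_lt {V : Type} (G : InfiniteBiosphere V) {v w : V}
    (h : G.Ancestor v w) : G.t v < G.t w := by
  have h' : Relation.TransGen G.Edge v w := h
  clear h
  induction h' with
  | single h => exact G.edge_t _ _ h
  | tail _ h ih => exact lt_trans ih (G.edge_t _ _ h)

/-- `IAP ∩ CONV ∩ CA ∩ REF` is upward generic. -/
theorem iap_conv_ca_ref_upwardGeneric {V : Type} (G : InfiniteBiosphere V) :
    UpwardGeneric {S : Set V |
      G.IAP S ∧ G.Convex S ∧ G.CommonAncestorProp S ∧ G.ReflectionProp S} := by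
  intro X _ _ C hmono hne hT
  classical
  have hmono' : ∀ a b : X, a ≤ b → C a ⊆ C b := by
    intro a b hab
    rcases lt_or_eq_of_le hab with h | h
    · exact hmono a b h
    · rw [h]
  have hIAP : ∀ a, G.IAP (C a) := fun a => (hT a).1
  have hConv : ∀ a, G.Convex (C a) := fun a => (hT a).2.1
  have hREF : ∀ a, G.ReflectionProp (C a) := fun a => (hT a).2.2.2
  choose vf hvfmem hvfanc using fun a => (hT a).2.2.1
  have hsubU : ∀ a, C a ⊆ ⋃ b : X, C b := fun a => Set.subset_iUnion C a
  have hmemU : ∀ w, w ∈ (⋃ b : X, C b) → ∃ a, w ∈ C a := fun w hw => Set.mem_iUnion.mp hw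
  -- t of the common ancestors is antitone
  have htle : ∀ a b : X, a ≤ b → G.t (vf b) ≤ G.t (vf a) := by
    intro a b hab
    have hva : vf a ∈ C b := hmono' a b hab (hvfmem a)
    by_cases h : vf a = vf b
    · rw [h]
    · exact le_of_lt (anc_t_lt G (hvfanc b (vf a) hva h))
  -- a common ancestor appearing cofinally
  obtain ⟨vs, hcof⟩ : ∃ u : V, ∀ x : X, ∃ b, x ≤ b ∧ vf b = u := by
    by_contra hno
    push_neg at hno
    set a0 : X := Classical.arbitrary X with ha0
    choose xf hxf using hno
    have hFfin : {u : V | ∃ b, a0 ≤ b ∧ vf b = u}.Finite := by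
      apply (G.finite_early (G.t (vf a0) + 1)).subset
      rintro u ⟨b, hab, rfl⟩
      have := htle a0 b hab
      simp only [Set.mem_setOf_eq]
      linarith
    obtain ⟨m, hm⟩ := ((hFfin.image xf).insert a0).bddAbove
    have hm0 : a0 ≤ m := hm (Set.mem_insert _ _)
    have humem : vf m ∈ {u : V | ∃ b, a0 ≤ b ∧ vf b = u} := ⟨m, hm0, rfl⟩
    have hxm : xf (vf m) ≤ m :=
      hm (Set.mem_insert_of_mem _ (Set.mem_image_of_mem _ humem))
    exact hxf (vf m) m hxm rfl
  have hvsU : vs ∈ ⋃ b : X, C b := by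
    obtain ⟨b, _, hb⟩ := hcof (Classical.arbitrary X)
    exact hsubU b (hb ▸ hvfmem b)
  -- vs is a common ancestor of the union
  have hCAU : ∀ w ∈ (⋃ b : X, C b), w ≠ vs → G.Ancestor vs w := by
    intro w hw hwne
    obtain ⟨a, ha⟩ := hmemU w hw
    obtain ⟨b, hab, hb⟩ := hcof a
    have : G.Ancestor (vf b) w :=
      hvfanc b w (hmono' a b hab ha) (by rw [hb]; exact hwne)
    rwa [hb] at this
  -- reflection for the union
  have hREFU : G.ReflectionProp (⋃ b : X, C b) := by
    intro w hw hinf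
    obtain ⟨a, ha⟩ := hmemU w hw
    exact (hREF a w ha hinf).mono (fun u hu => ⟨hsubU a hu.1, hu.2⟩)
  -- convexity for the union
  have hConvU : G.Convex (⋃ b : X, C b) := by
    rintro w ⟨a1, ha1, hanc⟩ ⟨d1, hd1, hdsc⟩
    obtain ⟨a, ha⟩ := hmemU a1 ha1
    obtain ⟨b, hb⟩ := hmemU d1 hd1
    rcases le_total a b with h | h
    · exact hsubU b (hConv b w ⟨a1, hmono' a b h ha, hanc⟩ ⟨d1, hb, hdsc⟩)
    · exact hsubU a (hConv a w ⟨a1, ha, hanc⟩ ⟨d1, hmono' b a h hb, hdsc⟩)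
  -- IAP for the union: the hard part
  have hIAPU : G.IAP (⋃ b : X, C b) := by
    intro v hv
    by_cases hfin : {w ∈ ⋃ b : X, C b | G.Ancestor v w}.Finite
    · exact Or.inr hfin
    · left
      by_contra hNinf'
      have hNinf : {w ∈ ⋃ b : X, C b | ¬ G.Ancestor v w}.Infinite := hNinf'
      have hdescinf : {w : V | G.Ancestor v w}.Infinite :=
        (Set.infinite_coe_iff.mp (Set.infinite_coe_iff.mpr hfin)).mono
          (fun u hu => hu.2)
      obtain ⟨av, hav⟩ := hmemU v hv
      obtain ⟨b0, hb0ge, hb0⟩ := hcof av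
      have hvb0 : v ∈ C b0 := hmono' av b0 hb0ge hav
      have hvsb0 : vs ∈ C b0 := hb0 ▸ hvfmem b0
      -- key fact in any chain member containing v
      have hkey : ∀ b : X, v ∈ C b →
          {w ∈ C b | G.Ancestor v w}.Infinite ∧ {w ∈ C b | ¬ G.Ancestor v w}.Finite := by
        intro b hvb
        have h1 : {w ∈ C b | G.Ancestor v w}.Infinite := hREF b v hvb hdescinf
        refine ⟨h1, ?_⟩
        rcases hIAP b v hvb with h | h
        · exact h
        · exact absurd h h1
      have hCb0inf : (C b0).Infinite := (hkey b0 hvb0).1.mono (fun u hu => hu.1)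
      have hNb0fin : {w ∈ C b0 | ¬ G.Ancestor v w}.Finite := (hkey b0 hvb0).2
      -- every non-descendant of v in the union with infinitely many descendants
      -- lies already in C b0
      have hW : ∀ w, w ∈ (⋃ b : X, C b) → ¬ G.Ancestor v w →
          {u : V | G.Ancestor w u}.Infinite → w ∈ C b0 := by
        intro w hwU hwnd hwinf
        obtain ⟨a, ha⟩ := hmemU w hwU
        obtain ⟨b, hble, hbv⟩ := hcof (max a b0)
        have hwb : w ∈ C b := hmono' a b (le_trans (le_max_left _ _) hble) ha
        have hb0b : C b0 ⊆ C b := hmono' b0 b (le_trans (le_max_right _ _) hble)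
        have h2 : {u ∈ C b | ¬ G.Ancestor w u}.Finite := by
          rcases hIAP b w hwb with h | h
          · exact h
          · exact absurd h (hREF b w hwb hwinf)
        obtain ⟨u, hub0, hu2⟩ := (hCb0inf.diff h2).nonempty
        have hanc : G.Ancestor w u := by
          by_contra hcon
          exact hu2 ⟨hb0b hub0, hcon⟩
        by_cases hwvs : w = vs
        · rw [hwvs]; exact hvsb0
        · exact hConv b0 w ⟨vs, hvsb0, hCAU w hwU hwvs⟩ ⟨u, hub0, hanc⟩
      -- the restricted edge relation inside the non-descendants of v
      set R : V → V → Prop :=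
        fun y z => G.Edge y z ∧ (z ∈ (⋃ b : X, C b) ∧ ¬ G.Ancestor v z) with hR
      -- paths from vs to non-descendants of v stay among non-descendants
      have hpath : ∀ w, G.Ancestor vs w →
          (w ∈ (⋃ b : X, C b) ∧ ¬ G.Ancestor v w) → Relation.ReflTransGen R vs w := by
        intro w hanc
        have hanc' : Relation.TransGen G.Edge vs w := hanc
        clear hanc
        induction hanc' with
        | single h => intro hwN; exact Relation.ReflTransGen.single ⟨h, hwN⟩
        | @tail b c h1 h2 ih =>
          intro hcN
          have hbN : b ∈ (⋃ b' : X, C b') ∧ ¬ G.Ancestor v b := by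
            constructor
            · obtain ⟨a, ha⟩ := hmemU c hcN.1
              obtain ⟨bb, hble, hbv⟩ := hcof a
              have hcb : c ∈ C bb := hmono' a bb hble ha
              have hvsb : vs ∈ C bb := hbv ▸ hvfmem bb
              exact hsubU bb (hConv bb b ⟨vs, hvsb, h1⟩ ⟨c, hcb, Relation.TransGen.single h2⟩)
            · intro hvb
              exact hcN.2 (Relation.TransGen.tail hvb h2)
          exact Relation.ReflTransGen.tail (ih hbN) ⟨h2, hcN⟩
      -- reachability sets
      have hstep : ∀ y : V,
          {w | (w ∈ (⋃ b : X, C b) ∧ ¬ G.Ancestor v w) ∧ Relation.ReflTransGen R y w}.Infinite →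
          ∃ z, R y z ∧
            {w | (w ∈ (⋃ b : X, C b) ∧ ¬ G.Ancestor v w) ∧ Relation.ReflTransGen R z w}.Infinite := by
        intro y hy
        by_contra hno
        push_neg at hno
        have hchild : {z : V | R y z}.Finite :=
          (G.finite_children y).subset (fun z hz => hz.1)
        have hsub : {w | (w ∈ (⋃ b : X, C b) ∧ ¬ G.Ancestor v w) ∧ Relation.ReflTransGen R y w} ⊆
            insert y (⋃ z ∈ {z : V | R y z},
              {w | (w ∈ (⋃ b : X, C b) ∧ ¬ G.Ancestor v w) ∧ Relation.ReflTransGen R z w}) := by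
          rintro w ⟨hwN, hrtg⟩
          rcases Relation.ReflTransGen.cases_head hrtg with h | ⟨z, hyz, hzw⟩
          · rw [← h]; exact Set.mem_insert _ _
          · exact Set.mem_insert_of_mem _
              (Set.mem_biUnion hyz ⟨hwN, hzw⟩)
        exact hy (((hchild.biUnion (fun z hz => hno z hz)).insert y).subset hsub)
      -- every reachability-infinite point has infinitely many descendants
      have hTdesc : ∀ y : V,
          {w | (w ∈ (⋃ b : X, C b) ∧ ¬ G.Ancestor v w) ∧ Relation.ReflTransGen R y w}.Infinite →
          {u : V | G.Ancestor y u}.Infinite := by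
        intro y hy
        apply (hy.diff (Set.finite_singleton y)).mono
        rintro u ⟨⟨huN, hrtg⟩, hne⟩
        rcases (Relation.reflTransGen_iff_eq_or_transGen).mp hrtg with h | h
        · exact absurd h (by simpa [Set.mem_singleton_iff] using hne)
        · exact Relation.TransGen.mono (p := G.Edge) (fun a b (hab : R a b) => hab.1) _ _ h
      -- vs reaches the whole infinite set of non-descendants
      have hvsinf :
          {w | (w ∈ (⋃ b : X, C b) ∧ ¬ G.Ancestor v w) ∧ Relation.ReflTransGen R vs w}.Infinite := by
        apply hNinf.mono
        intro w hw
        refine ⟨hw, ?_⟩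
        by_cases h : w = vs
        · rw [h]
        · exact hpath w (hCAU w hw.1 h) hw
      -- build an infinite descending chain of such points
      have hstep' : ∀ y : {y : V //
          {w | (w ∈ (⋃ b : X, C b) ∧ ¬ G.Ancestor v w) ∧ Relation.ReflTransGen R y w}.Infinite},
          ∃ z : {y : V //
          {w | (w ∈ (⋃ b : X, C b) ∧ ¬ G.Ancestor v w) ∧ Relation.ReflTransGen R y w}.Infinite},
          G.Edge y.1 z.1 ∧ (z.1 ∈ (⋃ b : X, C b) ∧ ¬ G.Ancestor v z.1) := by
        rintro ⟨y, hy⟩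
        obtain ⟨z, hz1, hz2⟩ := hstep y hy
        exact ⟨⟨z, hz2⟩, hz1.1, hz1.2⟩
      choose nxt hnxt1 hnxt2 using hstep'
      set f : ℕ → {y : V //
          {w | (w ∈ (⋃ b : X, C b) ∧ ¬ G.Ancestor v w) ∧ Relation.ReflTransGen R y w}.Infinite} :=
        fun n => Nat.rec ⟨vs, hvsinf⟩ (fun _ p => nxt p) n with hf
      have hfs : ∀ n : ℕ, f (n + 1) = nxt (f n) := fun n => rfl
      have hmonot : StrictMono (fun n : ℕ => G.t (f n).1) := by
        apply strictMono_nat_of_lt_succ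
        intro n
        have := hnxt1 (f n)
        rw [← hfs n] at this
        exact G.edge_t _ _ this
      have hinj : Function.Injective (fun n : ℕ => (f (n + 1)).1) := by
        intro m n h
        have := hmonot.injective (a₁ := m + 1) (a₂ := n + 1) (congrArg G.t h)
        omega
      have hmem : ∀ n : ℕ, (f (n + 1)).1 ∈ {w ∈ C b0 | ¬ G.Ancestor v w} := by
        intro n
        have hN : (f (n + 1)).1 ∈ (⋃ b : X, C b) ∧ ¬ G.Ancestor v (f (n + 1)).1 := by
          rw [hfs n]; exact hnxt2 (f n)
        exact ⟨hW _ hN.1 hN.2 (hTdesc _ (f (n + 1)).2), hN.2⟩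
      exact Set.infinite_of_injective_forall_mem hinj hmem hNb0fin
  exact ⟨hIAPU, hConvU, ⟨vs, hvsU, hCAU⟩, hREFU⟩
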